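/- Let F be an infinite field with an involution λ ↦ λ* and char(F) ≠ 2, let A be an F-algebra with involution (a *-algebra over F, so the involution of A is additive, antimultiplicative, involutive, and (λa)* = λ* a*), and let L_1, …, L_n be Lie skew-ideals of A. Then for every *-polynomial f = f(X_1, …, X_n, X_1^*, …, X_n^*) in the free *-algebra F⟨X_1, …, X_n, X_1^*, …, X_n^*⟩, the F-linear span of the set of values {f(a_1, …, a_n, a_1^*, …, a_n^*) : a_i ∈ L_i} is again a Lie skew-ideal of A. -/

import Mathlib

open Polynomial


/-- **Theorem 2.7.** Let `F` be an infinite field with an involution `τ` and `char F ≠ 2`,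
let `A` be an `F`-algebra with involution `st` (additive, antimultiplicative, involutive,
`(λ•a)* = τ(λ)•a*`), and let `L₁, …, Lₙ` be Lie skew-ideals of `A`.  Then for every
`*`-polynomial `f ∈ F⟨X₁,…,Xₙ,X₁*,…,Xₙ*⟩` (the free algebra on `Fin n ⊕ Fin n`, where
`inl i` plays the role of `Xᵢ` and `inr i` of `Xᵢ*`), the `F`-linear span of the set of
values `{f(a₁,…,aₙ,a₁*,…,aₙ*) : aᵢ ∈ Lᵢ}` is again a Lie skew-ideal of `A`. -/
theorem stmt_1 (F : Type*) [Field F] [Infinite F]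
    (τ : F →+* F) (hτ : ∀ c, τ (τ c) = c) (hchar : ringChar F ≠ 2)
    (A : Type*) [Ring A] [Algebra F A]
    (st : A → A)
    (hadd : ∀ x y, st (x + y) = st x + st y)
    (hmul : ∀ x y, st (x * y) = st y * st x)
    (hinv : ∀ x, st (st x) = x)
    (hsmul : ∀ (c : F) (x : A), st (c • x) = τ c • st x)
    (n : ℕ) (L : Fin n → Submodule F A)
    (hL : ∀ i, ∀ l ∈ L i, ∀ k : A, st k = -k → l * k - k * l ∈ L i)
    (f : FreeAlgebra F (Fin n ⊕ Fin n)) :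
    ∀ x ∈ Submodule.span F
        {y : A | ∃ a : Fin n → A, (∀ i, a i ∈ L i) ∧
          FreeAlgebra.lift F (Sum.elim a fun i => st (a i)) f = y},
      ∀ k : A, st k = -k → x * k - k * x ∈ Submodule.span F
        {y : A | ∃ a : Fin n → A, (∀ i, a i ∈ L i) ∧
          FreeAlgebra.lift F (Sum.elim a fun i => st (a i)) f = y} := by
  classical
  intro x hx k hk
  set V : Set A := {y : A | ∃ a : Fin n → A, (∀ i, a i ∈ L i) ∧
      FreeAlgebra.lift F (Sum.elim a fun i => st (a i)) f = y} with hV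
  set S : Submodule F A := Submodule.span F V with hSdef
  -- basic properties of st
  have hst0 : st 0 = 0 := by
    have h := hadd 0 0
    rw [add_zero] at h
    exact (add_eq_left.mp h.symm)
  have hstneg : ∀ x : A, st (-x) = -st x := by
    intro x
    have h := hadd x (-x)
    rw [add_neg_cancel, hst0] at h
    exact eq_neg_of_add_eq_zero_right h.symm
  have hstsub : ∀ x y : A, st (x - y) = st x - st y := by
    intro x y
    rw [sub_eq_add_neg, hadd, hstneg, sub_eq_add_neg]
  -- the fixed field of τ is infinite
  have hfix : {c : F | τ c = c}.Infinite := by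
    by_contra hfin
    rw [Set.not_infinite] at hfin
    have hsub : (Set.univ : Set F) ⊆
        ⋃ sp ∈ ({c : F | τ c = c} ×ˢ {c : F | τ c = c}),
          {z : F | ((X : F[X]) ^ 2 - C sp.1 * X + C sp.2).IsRoot z} := by
      intro z _
      have hm1 : (z + τ z, z * τ z) ∈ ({c : F | τ c = c} ×ˢ {c : F | τ c = c}) := by
        constructor
        · show τ (z + τ z) = z + τ z
          rw [map_add, hτ, add_comm]
        · show τ (z * τ z) = z * τ z
          rw [map_mul, hτ, mul_comm]
      have hm2 : ((X : F[X]) ^ 2 - C (z + τ z) * X + C (z * τ z)).IsRoot z := by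
        simp only [Polynomial.IsRoot, Polynomial.eval_add, Polynomial.eval_sub,
          Polynomial.eval_mul, Polynomial.eval_pow, Polynomial.eval_X, Polynomial.eval_C]
        ring
      exact Set.mem_biUnion hm1 hm2
    have hfinU : (Set.univ : Set F).Finite := by
      refine Set.Finite.subset (Set.Finite.biUnion (hfin.prod hfin) ?_) hsub
      intro sp _
      apply Polynomial.finite_setOf_isRoot
      intro hzero
      have h2 := congrArg (fun q : F[X] => q.coeff 2) hzero
      simp [Polynomial.coeff_X_pow] at h2
    exact Set.infinite_univ hfinU
  -- the commutator with k, as a linear map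
  set D : A →ₗ[F] A := LinearMap.mulRight F k - LinearMap.mulLeft F k with hD
  have hDapp : ∀ y : A, D y = y * k - k * y := fun y => rfl
  -- key step: generators are mapped into S
  have key : V ⊆ (Submodule.comap D S : Set A) := by
    rintro y ⟨a, ha, rfl⟩
    set b : Fin n → A := fun i => a i * k - k * a i with hb
    have hbL : ∀ i, b i ∈ L i := fun i => hL i (a i) (ha i) k hk
    -- st is compatible with the derivation
    have hstD : ∀ x : A, st (x * k - k * x) = st x * k - k * st x := by
      intro x
      rw [hstsub, hmul, hmul, hk]
      noncomm_ring
    set v : Fin n ⊕ Fin n → A[X] :=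
      Sum.elim (fun i => C (a i) + C (b i) * X) (fun i => C (st (a i)) + C (st (b i)) * X)
      with hv
    set P : A[X] := FreeAlgebra.lift F v f with hP
    set w : Fin n ⊕ Fin n → A := Sum.elim a fun i => st (a i) with hw
    -- coefficient computation
    have main : ∀ g : FreeAlgebra F (Fin n ⊕ Fin n),
        (FreeAlgebra.lift F v g).coeff 0 = FreeAlgebra.lift F w g ∧
        (FreeAlgebra.lift F v g).coeff 1 =
          (FreeAlgebra.lift F w g) * k - k * (FreeAlgebra.lift F w g) := by
      intro g
      induction g using FreeAlgebra.induction with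
      | grade0 r =>
        constructor
        · simp [Polynomial.algebraMap_apply]
        · simp only [AlgHom.commutes]
          rw [Polynomial.algebraMap_apply]
          simp [Algebra.commutes r k]
      | grade1 z =>
        cases z with
        | inl i =>
          constructor
          · simp [v, w]
          · simp [v, w, hb]
        | inr i =>
          constructor
          · simp [v, w]
          · simp only [FreeAlgebra.lift_ι_apply]
            simp [v, w, hb, hstD]
      | mul p q hp hq =>
        constructor
        · rw [map_mul, map_mul, Polynomial.mul_coeff_zero, hp.1, hq.1]
        · rw [map_mul, map_mul, Polynomial.coeff_mul,
            Finset.Nat.sum_antidiagonal_eq_sum_range_succ_mk]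
          simp only [Finset.sum_range_succ, Finset.sum_range_zero]
          rw [hp.1, hp.2, hq.1, hq.2]
          noncomm_ring
      | add p q hp hq =>
        constructor
        · rw [map_add, map_add, Polynomial.coeff_add, hp.1, hq.1]
        · rw [map_add, map_add, Polynomial.coeff_add, hp.2, hq.2]
          noncomm_ring
    -- evaluation at fixed points lands in S
    have heval : ∀ l : F, τ l = l →
        Polynomial.eval₂ (RingHom.id A) (algebraMap F A l) P ∈ S := by
      intro l hl
      set E : A[X] →ₐ[F] A := Polynomial.eval₂AlgHom (AlgHom.id F A) (algebraMap F A l)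
        (fun a => (Algebra.commutes l a).symm) with hE
      have hEeq : (E.comp (FreeAlgebra.lift F v) : FreeAlgebra F (Fin n ⊕ Fin n) →ₐ[F] A)
          = FreeAlgebra.lift F (fun j => E (v j)) := by
        apply FreeAlgebra.hom_ext
        funext j
        simp
      set a' : Fin n → A := fun i => a i + l • b i with ha'
      have hEC : ∀ c : A, E (C c) = c := fun c => by rw [hE]; exact Polynomial.eval₂_C _ _
      have hEX : E X = algebraMap F A l := by rw [hE]; exact Polynomial.eval₂_X _ _
      have hwj : (fun j => E (v j)) = Sum.elim a' fun i => st (a' i) := by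
        funext j
        cases j with
        | inl i =>
          show E (C (a i) + C (b i) * X) = a i + l • b i
          rw [map_add, map_mul, hEC, hEC, hEX, Algebra.smul_def, Algebra.commutes]
        | inr i =>
          show E (C (st (a i)) + C (st (b i)) * X) = st (a i + l • b i)
          rw [map_add, map_mul, hEC, hEC, hEX, hadd, hsmul, hl, Algebra.smul_def,
            Algebra.commutes]
      have hmem : FreeAlgebra.lift F (Sum.elim a' fun i => st (a' i)) f ∈ S := by
        apply Submodule.subset_span
        exact ⟨a', fun i => (L i).add_mem (ha i) ((L i).smul_mem l (hbL i)), rfl⟩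
      have : E P = FreeAlgebra.lift F (Sum.elim a' fun i => st (a' i)) f := by
        rw [hP, ← hwj]
        exact DFunLike.congr_fun hEeq f
      have hEP : Polynomial.eval₂ (RingHom.id A) (algebraMap F A l) P = E P := rfl
      rw [hEP, this]
      exact hmem
    -- all coefficients of P lie in S
    have hcoeff : ∀ j : ℕ, P.coeff j ∈ S := by
      intro j
      rw [← Submodule.Quotient.mk_eq_zero]
      rw [← Module.forall_dual_apply_eq_zero_iff F]
      intro φ
      set ψ : A →ₗ[F] F := φ.comp S.mkQ with hψ
      set p : F[X] := ⟨AddMonoidAlgebra.ofCoeff (P.toFinsupp.coeff.mapRange ψ (map_zero ψ))⟩ with hp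
      have hpcoeff : ∀ e : ℕ, p.coeff e = ψ (P.coeff e) := by
        intro e
        rw [hp]
        simp [Polynomial.coeff, Finsupp.mapRange_apply]
      have hpdeg : p.natDegree ≤ P.natDegree := by
        apply Polynomial.natDegree_le_iff_coeff_eq_zero.mpr
        intro m hm
        rw [hpcoeff, Polynomial.coeff_eq_zero_of_natDegree_lt hm, map_zero]
      have hproots : ∀ l ∈ {c : F | τ c = c}, p.IsRoot l := by
        intro l hl
        have h1 : ψ (Polynomial.eval₂ (RingHom.id A) (algebraMap F A l) P) = 0 := by
          have := heval l hl
          rw [hψ]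
          simp only [LinearMap.comp_apply, Submodule.mkQ_apply]
          rw [(Submodule.Quotient.mk_eq_zero S).mpr this, map_zero]
        have h2 : Polynomial.eval₂ (RingHom.id A) (algebraMap F A l) P =
            ∑ i ∈ Finset.range (P.natDegree + 1), P.coeff i * (algebraMap F A l) ^ i := by
          exact Polynomial.eval₂_eq_sum_range' (RingHom.id A) (Nat.lt_succ_self _)
            (algebraMap F A l)
          -- note: RingHom.id A = RingHom.id A acts as identity
        have h3 : p.eval l = ∑ i ∈ Finset.range (P.natDegree + 1), p.coeff i * l ^ i :=
          Polynomial.eval_eq_sum_range' (Nat.lt_succ_of_le hpdeg) l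
        show p.eval l = 0
        rw [h3, ← h1, h2, map_sum]
        apply Finset.sum_congr rfl
        intro i _
        rw [hpcoeff]
        have : P.coeff i * (algebraMap F A l) ^ i = (l ^ i) • P.coeff i := by
          rw [← map_pow, Algebra.smul_def, Algebra.commutes]
        rw [this, map_smul, smul_eq_mul, mul_comm]
      have hpz : p = 0 := by
        apply Polynomial.eq_zero_of_infinite_isRoot
        exact Set.Infinite.mono hproots hfix
      have := hpcoeff j
      rw [hpz] at this
      simp only [Polynomial.coeff_zero] at this
      rw [hψ] at this
      simpa using this.symm
    -- conclude
    show D (FreeAlgebra.lift F w f) ∈ S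
    rw [hDapp, ← (main f).2]
    exact hcoeff 1
  have hspan : S ≤ Submodule.comap D S := Submodule.span_le.mpr key
  have := hspan hx
  rw [Submodule.mem_comap, hDapp] at this
  exact this
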